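/- Let V be an isometry on H and let T be a bounded operator commuting with V, i.e., TV = VT. If W = ker V*, then for every w ∈ W, Tw = ∑_{n≥0} Vⁿ P_W (V*)ⁿ T w, provided V is pure. -/

import Mathlib

open Filter Topology
open scoped ComplexInnerProductSpace

/-- For a pure isometry `V` and `T` commuting with `V`, every `w ∈ W = ker V*`
satisfies `T w = ∑ₙ Vⁿ P_W V*ⁿ T w`. -/
theorem commutant_expansion_on_wandering_subspace
    {H : Type*} [NormedAddCommGroup H] [InnerProductSpace ℂ H] [CompleteSpace H]
    (V : H →L[ℂ] H) (hV : ∀ x, ‖V x‖ = ‖x‖)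
    (hpure : ∀ x : H, Tendsto (fun n : ℕ => (V ^ n) ((ContinuousLinearMap.adjoint V ^ n) x))
      atTop (𝓝 0))
    (T : H →L[ℂ] H) (hT : T.comp V = V.comp T)
    (W : Submodule ℂ H) [Submodule.HasOrthogonalProjection W]
    (hW : W = LinearMap.ker (ContinuousLinearMap.adjoint V : H →ₗ[ℂ] H)) :
    ∀ w ∈ W,
      Tendsto (fun N : ℕ => ∑ n ∈ Finset.range N,
          (V ^ n) ((Submodule.orthogonalProjectionOnto W ((ContinuousLinearMap.adjoint V ^ n) (T w)) : H)))
        atTop (𝓝 (T w)) := by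
  intro w hw
  set V' := ContinuousLinearMap.adjoint V with hV'
  -- V is a linear isometry
  have hinner : ∀ x y : H, (inner ℂ (V x) (V y) : ℂ) = inner ℂ x y := fun x y =>
    LinearIsometry.inner_map_map ⟨V.toLinearMap, hV⟩ x y
  have hVV : ∀ y : H, V' (V y) = y := by
    intro y
    apply ext_inner_right ℂ
    intro z
    rw [hV', ContinuousLinearMap.adjoint_inner_left, hinner]
  -- orthogonal projection onto W
  have hproj : ∀ y : H, (Submodule.orthogonalProjectionOnto W y : H) = y - V (V' y) := by
    intro y
    have hmem : y - V (V' y) ∈ W := by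
      rw [hW, LinearMap.mem_ker]
      simp [map_sub, hVV]
    rw [← Submodule.starProjection_apply]
    refine Submodule.eq_starProjection_of_mem_of_inner_eq_zero (K := W) (u := y) hmem ?_
    intro z hz
    have hz' : (ContinuousLinearMap.adjoint V) z = 0 := by rw [hW] at hz; exact hz
    rw [sub_sub_cancel, ← ContinuousLinearMap.adjoint_inner_right, hz', inner_zero_right]
  set x := T w with hx
  set f : ℕ → H := fun n => (V ^ n) ((V' ^ n) x) with hf
  have hterm : ∀ n, (V ^ n) ((Submodule.orthogonalProjectionOnto W ((V' ^ n) x) : H)) = f n - f (n + 1) := by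
    intro n
    have h1 : f (n + 1) = (V ^ n) (V (V' ((V' ^ n) x))) := by
      simp only [hf, pow_succ V, pow_succ' V', ContinuousLinearMap.mul_apply]
    rw [hproj, map_sub, h1]
  have hsum : ∀ N, (∑ n ∈ Finset.range N,
      (V ^ n) ((Submodule.orthogonalProjectionOnto W ((V' ^ n) x) : H))) = x - f N := by
    intro N
    simp only [hterm]
    rw [Finset.sum_range_sub' f N]
    simp [hf]
  simp only [hsum]
  have : Tendsto (fun N => x - f N) atTop (𝓝 (x - 0)) := tendsto_const_nhds.sub (hpure x)
  simpa using this
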